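/- Let p_1 = 2, p_2 = 3, … denote the prime numbers in increasing order. For every integer S ≥ 13, the Chebyshev function satisfies θ(p_S) = ∑_{i=1}^{S} log p_i ≥ S·log S. -/

import Mathlib

set_option maxRecDepth 20000

open Finset

attribute [local instance] Nat.decidablePrime

private lemma nth_eq (n v : ℕ) (h1 : Nat.Prime v) (h2 : Nat.count Nat.Prime v = n) :
    Nat.nth Nat.Prime n = v := by rw [← h2, Nat.nth_count h1]

private lemma nth0 : Nat.nth Nat.Prime 0 = 2 := nth_eq 0 2 (by norm_num) (by decide)
private lemma nth1 : Nat.nth Nat.Prime 1 = 3 := nth_eq 1 3 (by norm_num) (by decide)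
private lemma nth2 : Nat.nth Nat.Prime 2 = 5 := nth_eq 2 5 (by norm_num) (by decide)
private lemma nth3 : Nat.nth Nat.Prime 3 = 7 := nth_eq 3 7 (by norm_num) (by decide)
private lemma nth4 : Nat.nth Nat.Prime 4 = 11 := nth_eq 4 11 (by norm_num) (by decide)
private lemma nth5 : Nat.nth Nat.Prime 5 = 13 := nth_eq 5 13 (by norm_num) (by decide)
private lemma nth6 : Nat.nth Nat.Prime 6 = 17 := nth_eq 6 17 (by norm_num) (by decide)
private lemma nth7 : Nat.nth Nat.Prime 7 = 19 := nth_eq 7 19 (by norm_num) (by decide)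
private lemma nth8 : Nat.nth Nat.Prime 8 = 23 := nth_eq 8 23 (by norm_num) (by decide)
private lemma nth9 : Nat.nth Nat.Prime 9 = 29 := nth_eq 9 29 (by norm_num) (by decide)
private lemma nth10 : Nat.nth Nat.Prime 10 = 31 := nth_eq 10 31 (by norm_num) (by decide)
private lemma nth11 : Nat.nth Nat.Prime 11 = 37 := nth_eq 11 37 (by norm_num) (by decide)
private lemma nth12 : Nat.nth Nat.Prime 12 = 41 := nth_eq 12 41 (by norm_num) (by decide)

private lemma primes_Ico_card (n : ℕ) (hn : 6 ≤ n) :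
    ((Finset.Ico n (n + 30)).filter Nat.Prime).card ≤ 8 := by
  classical
  have h : ((Finset.Ico n (n + 30)).filter Nat.Prime).card
      ≤ ({1, 7, 11, 13, 17, 19, 23, 29} : Finset ℕ).card := by
    apply Finset.card_le_card_of_injOn (fun m => m % 30)
    · intro m hm
      simp only [mem_coe, mem_filter, mem_Ico] at hm
      obtain ⟨⟨h1, h2⟩, hp⟩ := hm
      have h2' : m % 2 ≠ 0 := by
        intro hd
        rcases hp.eq_one_or_self_of_dvd 2 (Nat.dvd_of_mod_eq_zero hd) with h | h <;> omega
      have h3' : m % 3 ≠ 0 := by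
        intro hd
        rcases hp.eq_one_or_self_of_dvd 3 (Nat.dvd_of_mod_eq_zero hd) with h | h <;> omega
      have h5' : m % 5 ≠ 0 := by
        intro hd
        rcases hp.eq_one_or_self_of_dvd 5 (Nat.dvd_of_mod_eq_zero hd) with h | h <;> omega
      have e2 : m % 30 % 2 = m % 2 := Nat.mod_mod_of_dvd m (by norm_num)
      have e3 : m % 30 % 3 = m % 3 := Nat.mod_mod_of_dvd m (by norm_num)
      have e5 : m % 30 % 5 = m % 5 := Nat.mod_mod_of_dvd m (by norm_num)
      rw [← e2] at h2'
      rw [← e3] at h3'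
      rw [← e5] at h5'
      have hr : m % 30 < 30 := Nat.mod_lt _ (by norm_num)
      simp only [mem_coe, mem_insert, mem_singleton]
      generalize hg : m % 30 = r at h2' h3' h5' hr ⊢
      interval_cases r <;> omega
    · intro a ha b hb hab
      simp only [coe_filter, Set.mem_setOf_eq, mem_Ico] at ha hb
      simp only at hab
      omega
  calc ((Finset.Ico n (n + 30)).filter Nat.Prime).card
      ≤ ({1, 7, 11, 13, 17, 19, 23, 29} : Finset ℕ).card := h
    _ ≤ 8 := by decide

private lemma count_le (n : ℕ) : 15 * Nat.count Nat.Prime n ≤ 4 * n + 40 := by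
  induction n using Nat.strong_induction_on with
  | _ n ih =>
    rcases lt_or_ge n 36 with h | h
    · interval_cases n <;> decide
    · have hsplit : Nat.count Nat.Prime n =
          Nat.count Nat.Prime (n - 30) + ((Finset.Ico (n - 30) n).filter Nat.Prime).card := by
        rw [Nat.count_eq_card_filter_range, Nat.count_eq_card_filter_range, range_eq_Ico, range_eq_Ico,
            show Finset.Ico 0 n = Finset.Ico 0 (n - 30) ∪ Finset.Ico (n - 30) n from
              (Finset.Ico_union_Ico_eq_Ico (Nat.zero_le _) (by omega : n - 30 ≤ n)).symm,
            filter_union, card_union_of_disjoint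
              (disjoint_filter_filter (Finset.Ico_disjoint_Ico_consecutive 0 (n - 30) n))]
      have hcard : ((Finset.Ico (n - 30) n).filter Nat.Prime).card ≤ 8 := by
        have := primes_Ico_card (n - 30) (by omega)
        rwa [show n - 30 + 30 = n by omega] at this
      have := ih (n - 30) (by omega)
      omega

private lemma nth_ge (i : ℕ) : 15 * i ≤ 4 * Nat.nth Nat.Prime i + 40 := by
  have h := count_le (Nat.nth Nat.Prime i)
  rwa [Nat.count_nth_of_infinite Nat.infinite_setOf_prime] at h

private lemma nth_prime_big (S : ℕ) (hS : 13 ≤ S) :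
    (2.7182818286 : ℝ) * (S + 1) ≤ (Nat.nth Nat.Prime S : ℝ) := by
  have h9 := nth_ge S
  have h9' : (15 : ℝ) * S ≤ 4 * (Nat.nth Nat.Prime S : ℝ) + 40 := by exact_mod_cast h9
  have hS' : (13 : ℝ) ≤ S := by exact_mod_cast hS
  nlinarith

theorem sum_log_primes_lower_bound (S : ℕ) (hS : 13 ≤ S) :
    (S : ℝ) * Real.log S ≤ ∑ i ∈ Finset.range S, Real.log (Nat.nth Nat.Prime i) := by
  induction S, hS using Nat.le_induction with
  | base =>
    have hprod : ∑ i ∈ Finset.range 13, Real.log (Nat.nth Nat.Prime i)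
        = Real.log 304250263527210 := by
      rw [show (304250263527210 : ℝ) = ((304250263527210 : ℕ) : ℝ) by norm_num,
          show (304250263527210 : ℕ) = ∏ i ∈ Finset.range 13, Nat.nth Nat.Prime i by
            simp [Finset.prod_range_succ, nth0, nth1, nth2, nth3, nth4, nth5, nth6, nth7,
              nth8, nth9, nth10, nth11, nth12],
          Nat.cast_prod, Real.log_prod]
      intro i hi
      simp only [Finset.mem_range] at hi
      have hp : Nat.Prime (Nat.nth Nat.Prime i) :=
        Nat.nth_mem_of_infinite Nat.infinite_setOf_prime i
      exact_mod_cast hp.ne_zero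
    rw [hprod]
    have hc : ((13 : ℕ) : ℝ) = (13 : ℝ) := by norm_num
    rw [hc]
    have h1 : (13 : ℝ) * Real.log 13 = Real.log (13 ^ 13) := by
      rw [Real.log_pow]; norm_num
    rw [h1]
    have h2 : ((13 : ℝ) ^ 13) ≤ 304250263527210 := by norm_num
    exact Real.log_le_log (by positivity) h2
  | succ S hS ih =>
    rw [Finset.sum_range_succ]
    have hSpos : (0 : ℝ) < S := by
      have : (13 : ℝ) ≤ S := by exact_mod_cast hS
      linarith
    have hnth := nth_prime_big S hS
    have key : Real.log (S + 1) + 1 ≤ Real.log (Nat.nth Nat.Prime S) := by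
      have he : Real.exp 1 * ((S : ℝ) + 1) ≤ (Nat.nth Nat.Prime S : ℝ) := by
        have hlt := Real.exp_one_lt_d9
        nlinarith
      calc Real.log ((S : ℝ) + 1) + 1 = Real.log (Real.exp 1 * ((S : ℝ) + 1)) := by
            rw [Real.log_mul (Real.exp_ne_zero 1) (by positivity), Real.log_exp]; ring
        _ ≤ Real.log (Nat.nth Nat.Prime S) := Real.log_le_log (by positivity) he
    have h2 : Real.log (((S : ℝ) + 1) / S) ≤ 1 / S := by
      have hh := Real.log_le_sub_one_of_pos (show (0 : ℝ) < ((S : ℝ) + 1) / S by positivity)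
      have he : ((S : ℝ) + 1) / S - 1 = 1 / S := by field_simp; ring
      linarith
    have h2' : Real.log ((S : ℝ) + 1) ≤ Real.log S + 1 / S := by
      rw [Real.log_div (by positivity) (ne_of_gt hSpos)] at h2; linarith
    have h2'' : (S : ℝ) * Real.log ((S : ℝ) + 1) ≤ (S : ℝ) * Real.log S + 1 := by
      have hm := mul_le_mul_of_nonneg_left h2' (le_of_lt hSpos)
      have hs : (S : ℝ) * (Real.log S + 1 / S) = (S : ℝ) * Real.log S + 1 := by field_simp
      nlinarith
    have expand : ((S : ℝ) + 1) * Real.log ((S : ℝ) + 1)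
        = (S : ℝ) * Real.log ((S : ℝ) + 1) + Real.log ((S : ℝ) + 1) := by ring
    push_cast
    linarith [ih, key, h2'', expand]
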